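/- arXiv:2605.25275 — 4 statements merged into one kernel-verified Lean document; each statement's English description precedes it below -/
import Mathlib

section
/- Let K ∈ ℝ^{n×n} be real symmetric positive semidefinite with eigenvalues λ₁, …, λ_n and orthonormal eigenvectors v₁, …, v_n, let r₀ ∈ ℝⁿ with L₀ := ½‖r₀‖² ≥ 1, and let constants c > δ > 0 satisfy (c − δ)λ_i ≤ (v_iᵀ r₀)² ≤ (c + δ)λ_i for all i ∈ [n]. Let ε ∈ (0,1) and η > 0 with η‖K‖_op ≤ 1. Suppose a sequence of residual vectors r_t ∈ ℝⁿ satisfies r_t = (I − ηK)^t r₀ + Δ_t with ‖Δ_t‖ ≤ ε/(4√L₀) for every integer t ≥ 0. Then for every t ≥ 0: (c − δ)/2 · tr[(I − ηK)^{2t} K] − ε/2 ≤ ½‖r_t‖² ≤ (c + δ)/2 · tr[(I − ηK)^{2t} K] + ε/2. -/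
open Matrix
set_option maxHeartbeats 2000000

/-- The Euclidean norm of a vector in `ℝⁿ`. -/
noncomputable def enorm {n : ℕ} (x : Fin n → ℝ) : ℝ :=
  Real.sqrt (∑ i, x i ^ 2)

/-- The operator (spectral) norm of a matrix with respect to Euclidean norms. -/
noncomputable def l2OpNorm {n m : ℕ} (A : Matrix (Fin n) (Fin m) ℝ) : ℝ :=
  ‖LinearMap.toContinuousLinearMap (Matrix.toEuclideanLin A)‖

/-- **Theorem 4.3** (improved convergence bound), with the NTK-regime
linearization `r_t = (I - ηK)^t r₀ + Δ_t`, `‖Δ_t‖ ≤ ε/(4√L₀)` taken as a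
hypothesis. -/
theorem improved_convergence_bound (n : ℕ)
    (K : Matrix (Fin n) (Fin n) ℝ) (hK : K.PosSemidef)
    (lam : Fin n → ℝ) (v : Fin n → Fin n → ℝ)
    (hortho : ∀ i j, v i ⬝ᵥ v j = if i = j then (1 : ℝ) else 0)
    (heig : ∀ i, K.mulVec (v i) = lam i • v i)
    (r₀ : Fin n → ℝ) (L₀ : ℝ) (hL₀def : L₀ = (1 / 2) * (r₀ ⬝ᵥ r₀)) (hL₀ : 1 ≤ L₀)
    (c δ : ℝ) (hδ : 0 < δ) (hδc : δ < c)
    (halign : ∀ i, (c - δ) * lam i ≤ (v i ⬝ᵥ r₀) ^ 2 ∧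
      (v i ⬝ᵥ r₀) ^ 2 ≤ (c + δ) * lam i)
    (ε η : ℝ) (hε : ε ∈ Set.Ioo (0 : ℝ) 1) (hη : 0 < η)
    (hηK : η * l2OpNorm K ≤ 1)
    (r Δ : ℕ → Fin n → ℝ)
    (hr : ∀ t : ℕ, r t = ((1 - η • K) ^ t).mulVec r₀ + Δ t)
    (hΔ : ∀ t : ℕ, _root_.enorm (Δ t) ≤ ε / (4 * Real.sqrt L₀)) :
    ∀ t : ℕ,
      (c - δ) / 2 * ((1 - η • K) ^ (2 * t) * K).trace - ε / 2 ≤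
        (1 / 2) * (r t ⬝ᵥ r t) ∧
      (1 / 2) * (r t ⬝ᵥ r t) ≤
        (c + δ) / 2 * ((1 - η • K) ^ (2 * t) * K).trace + ε / 2 := by
  obtain ⟨hε0, hε1⟩ := hε
  set V : Matrix (Fin n) (Fin n) ℝ := Matrix.of v with hV
  have hVVt : V * Vᵀ = 1 := by
    ext i j
    simpa [Matrix.mul_apply, Matrix.one_apply, hV, dotProduct] using hortho i j
  have hVtV : Vᵀ * V = 1 := mul_eq_one_comm.mp hVVt
  set M : Matrix (Fin n) (Fin n) ℝ := 1 - η • K with hM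
  set μ : Fin n → ℝ := fun i => 1 - η * lam i with hμ
  have hvv : ∀ i, v i ⬝ᵥ v i = 1 := by intro i; simpa using hortho i i
  -- eigenvalues are nonneg
  have hlam0 : ∀ i, 0 ≤ lam i := by
    intro i
    have h1 : v i ⬝ᵥ K.mulVec (v i) = lam i := by
      rw [heig i, dotProduct_smul, hvv i]; simp
    have h2 := hK.dotProduct_mulVec_nonneg (v i)
    have h3 : star (v i) = v i := rfl
    rw [h3, h1] at h2
    simpa using h2
  -- eigenvalues are at most the operator norm
  have hlamK : ∀ i, lam i ≤ l2OpNorm K := by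
    intro i
    set w : EuclideanSpace ℝ (Fin n) := (WithLp.equiv 2 (Fin n → ℝ)).symm (v i) with hw
    have hnv : ‖w‖ = 1 := by
      rw [EuclideanSpace.norm_eq]
      have h2 : ∀ j, ‖w j‖ ^ 2 = v i j * v i j := by
        intro j
        rw [hw, WithLp.equiv_symm_apply, PiLp.toLp_apply, Real.norm_eq_abs, sq_abs, sq]
      rw [Finset.sum_congr rfl (fun j _ => h2 j),
        show ∑ j, v i j * v i j = v i ⬝ᵥ v i from rfl, hvv i, Real.sqrt_one]
    have hKv : (LinearMap.toContinuousLinearMap (Matrix.toEuclideanLin K)) w =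
        (WithLp.equiv 2 (Fin n → ℝ)).symm (lam i • v i) := by
      simp only [LinearMap.coe_toContinuousLinearMap']
      rw [hw, WithLp.equiv_symm_apply, Matrix.toEuclideanLin_apply_piLp_toLp, heig i]
    have hle := (LinearMap.toContinuousLinearMap (Matrix.toEuclideanLin K)).le_opNorm w
    rw [hKv, hnv, mul_one] at hle
    have heq : (WithLp.equiv 2 (Fin n → ℝ)).symm (lam i • v i) = lam i • w := rfl
    rw [heq, norm_smul, hnv, mul_one, Real.norm_eq_abs] at hle
    exact (le_abs_self (lam i)).trans hle
  have hημ : ∀ i, |μ i| ≤ 1 := by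
    intro i
    have h1 : η * lam i ≤ 1 :=
      le_trans (mul_le_mul_of_nonneg_left (hlamK i) hη.le) hηK
    have h2 : 0 ≤ η * lam i := mul_nonneg hη.le (hlam0 i)
    rw [abs_le]
    constructor <;> simp only [hμ] <;> linarith
  -- M * Vᵀ = Vᵀ * diagonal μ
  have hcol : ∀ (A : Matrix (Fin n) (Fin n) ℝ) i j, (A * Vᵀ) i j = A.mulVec (v j) i := by
    intro A i j
    simp [Matrix.mul_apply, Matrix.mulVec, dotProduct, hV]
  have hdiagcol : ∀ (d : Fin n → ℝ) i j, (Vᵀ * Matrix.diagonal d) i j = d j * v j i := by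
    intro d i j
    simp [Matrix.mul_apply, Matrix.diagonal, hV, mul_comm]
  have hMVt : M * Vᵀ = Vᵀ * Matrix.diagonal μ := by
    ext i j
    rw [hcol, hdiagcol]
    have h2 : M.mulVec (v j) = μ j • v j := by
      simp only [hM, Matrix.sub_mulVec, Matrix.one_mulVec, Matrix.smul_mulVec, heig j,
        hμ, sub_smul, smul_smul, one_smul]
    rw [h2]; rfl
  have hKVt : K * Vᵀ = Vᵀ * Matrix.diagonal lam := by
    ext i j
    rw [hcol, hdiagcol, heig j]; rfl
  have hMpow : ∀ t : ℕ, M ^ t * Vᵀ = Vᵀ * Matrix.diagonal (fun i => μ i ^ t) := by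
    intro t
    induction t with
    | zero => simp
    | succ t ih =>
      have hfun : (fun i => μ i ^ t * μ i) = fun i => μ i ^ (t + 1) := by
        funext i; rw [pow_succ]
      rw [pow_succ, mul_assoc, hMVt, ← mul_assoc, ih, mul_assoc,
        Matrix.diagonal_mul_diagonal, hfun]
  have hKdecomp : K = Vᵀ * Matrix.diagonal lam * V := by
    calc K = K * (Vᵀ * V) := by rw [hVtV, mul_one]
      _ = K * Vᵀ * V := by rw [mul_assoc]
      _ = Vᵀ * Matrix.diagonal lam * V := by rw [hKVt]
  -- trace formula
  have htrace : ∀ t : ℕ, (M ^ (2 * t) * K).trace = ∑ i, μ i ^ (2 * t) * lam i := by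
    intro t
    have key : M ^ (2 * t) * K
        = Vᵀ * Matrix.diagonal (fun i => μ i ^ (2 * t) * lam i) * V := by
      conv_lhs => rw [hKdecomp]
      rw [← mul_assoc, ← mul_assoc, hMpow, mul_assoc Vᵀ, Matrix.diagonal_mul_diagonal]
    rw [key, Matrix.trace_mul_cycle, hVVt, one_mul, Matrix.trace_diagonal]
  -- decomposition of powers acting on r₀
  set a : Fin n → ℝ := V.mulVec r₀ with ha
  have hai : ∀ i, a i = v i ⬝ᵥ r₀ := by
    intro i; simp [ha, Matrix.mulVec, hV, dotProduct]
  have hr₀ : ∀ t : ℕ, (M ^ t).mulVec r₀ =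
      Vᵀ.mulVec ((Matrix.diagonal (fun i => μ i ^ t)).mulVec a) := by
    intro t
    calc (M ^ t).mulVec r₀ = (M ^ t).mulVec ((Vᵀ * V).mulVec r₀) := by
          rw [hVtV, Matrix.one_mulVec]
      _ = (M ^ t * Vᵀ * V).mulVec r₀ := by
          rw [Matrix.mulVec_mulVec, ← mul_assoc]
      _ = (Vᵀ * Matrix.diagonal (fun i => μ i ^ t) * V).mulVec r₀ := by rw [hMpow]
      _ = _ := by rw [← Matrix.mulVec_mulVec, ← Matrix.mulVec_mulVec]
  -- isometry of Vᵀ.mulVec on dotProduct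
  have hiso : ∀ x y : Fin n → ℝ, Vᵀ.mulVec x ⬝ᵥ Vᵀ.mulVec y = x ⬝ᵥ y := by
    intro x y
    rw [Matrix.dotProduct_mulVec, Matrix.vecMul_transpose, Matrix.mulVec_mulVec, hVVt,
      Matrix.one_mulVec]
  -- squared norm of M^t r₀
  have hnormsq : ∀ t : ℕ, (M ^ t).mulVec r₀ ⬝ᵥ (M ^ t).mulVec r₀
      = ∑ i, μ i ^ (2 * t) * a i ^ 2 := by
    intro t
    rw [hr₀ t, hiso]
    simp only [dotProduct, Matrix.mulVec_diagonal]
    congr 1; funext i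
    rw [two_mul, pow_add]; ring
  -- ∑ a i ^ 2 = 2 L₀
  have hsuma : ∑ i, a i ^ 2 = 2 * L₀ := by
    have h2 : Vᵀ.mulVec (V.mulVec r₀) = r₀ := by
      rw [Matrix.mulVec_mulVec, hVtV, Matrix.one_mulVec]
    have h3 : a ⬝ᵥ a = r₀ ⬝ᵥ r₀ := by
      conv_rhs => rw [← h2, ← ha, hiso]
    have h4 : ∑ i, a i ^ 2 = a ⬝ᵥ a := by
      simp [dotProduct, sq]
    rw [h4, h3, hL₀def]; ring
  -- positivity facts
  have hs1 : (1:ℝ) ≤ Real.sqrt L₀ := by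
    rw [show (1:ℝ) = Real.sqrt 1 by rw [Real.sqrt_one]]
    exact Real.sqrt_le_sqrt hL₀
  have hs0 : (0:ℝ) < Real.sqrt L₀ := lt_of_lt_of_le one_pos hs1
  have hsL : Real.sqrt L₀ ^ 2 = L₀ := Real.sq_sqrt (le_trans zero_le_one hL₀)
  have hsqrt2 : Real.sqrt 2 ≤ 1.5 := by
    nlinarith [Real.sq_sqrt (show (0:ℝ) ≤ 2 by norm_num), Real.sqrt_nonneg 2]
  have hμpow : ∀ (t : ℕ) (i : Fin n), (0:ℝ) ≤ μ i ^ (2 * t) ∧ μ i ^ (2 * t) ≤ 1 := by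
    intro t i
    constructor
    · rw [mul_comm, pow_mul]; positivity
    · calc μ i ^ (2*t) ≤ |μ i ^ (2*t)| := le_abs_self _
        _ = |μ i| ^ (2*t) := by rw [abs_pow]
        _ ≤ 1 := pow_le_one₀ (abs_nonneg _) (hημ i)
  intro t
  set S : ℝ := ∑ i, μ i ^ (2 * t) * lam i with hS
  set P : ℝ := ∑ i, μ i ^ (2 * t) * a i ^ 2 with hP
  -- alignment bounds
  have hPS : (c - δ) * S ≤ P ∧ P ≤ (c + δ) * S := by
    constructor
    · rw [hS, Finset.mul_sum]
      apply Finset.sum_le_sum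
      intro i _
      rw [← mul_assoc, mul_comm (c - δ), mul_assoc]
      exact mul_le_mul_of_nonneg_left (by rw [hai i]; exact (halign i).1) (hμpow t i).1
    · rw [hS, Finset.mul_sum]
      apply Finset.sum_le_sum
      intro i _
      rw [← mul_assoc, mul_comm (c + δ), mul_assoc]
      exact mul_le_mul_of_nonneg_left (by rw [hai i]; exact (halign i).2) (hμpow t i).1
  have hP0 : 0 ≤ P := by
    rw [hP]
    apply Finset.sum_nonneg
    intro i _
    exact mul_nonneg (hμpow t i).1 (sq_nonneg _)
  have hP2L : P ≤ 2 * L₀ := by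
    rw [hP, ← hsuma]
    apply Finset.sum_le_sum
    intro i _
    have h := hμpow t i
    nlinarith [sq_nonneg (a i)]
  set m : Fin n → ℝ := (M ^ t).mulVec r₀ with hm
  have hmm : m ⬝ᵥ m = P := hnormsq t
  have hexp : r t ⬝ᵥ r t = P + 2 * (m ⬝ᵥ Δ t) + Δ t ⬝ᵥ Δ t := by
    rw [hr t, ← hm, add_dotProduct, dotProduct_add, dotProduct_add,
      dotProduct_comm (Δ t) m, hmm]
    ring
  -- cross term bound
  have hmsum : ∑ i, m i ^ 2 = P := by rw [← hmm]; simp [dotProduct, sq]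
  have hcross : |m ⬝ᵥ Δ t| ≤ Real.sqrt 2 / 4 * ε := by
    have hDle : Real.sqrt (∑ i, Δ t i ^ 2) ≤ ε / (4 * Real.sqrt L₀) := hΔ t
    have hmle : Real.sqrt (∑ i, m i ^ 2) ≤ Real.sqrt 2 * Real.sqrt L₀ := by
      rw [hmsum, ← Real.sqrt_mul (by norm_num : (0:ℝ) ≤ 2)]
      exact Real.sqrt_le_sqrt hP2L
    have key : ∀ x : Fin n → ℝ, (∑ i, x i ^ 2 = P) →
        x ⬝ᵥ Δ t ≤ Real.sqrt 2 / 4 * ε := by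
      intro x hx
      have h1 : x ⬝ᵥ Δ t ≤ Real.sqrt (∑ i, x i ^ 2) * Real.sqrt (∑ i, Δ t i ^ 2) :=
        Real.sum_mul_le_sqrt_mul_sqrt _ _ _
      have h2 : Real.sqrt (∑ i, x i ^ 2) ≤ Real.sqrt 2 * Real.sqrt L₀ := by
        rw [hx, ← Real.sqrt_mul (by norm_num : (0:ℝ) ≤ 2)]
        exact Real.sqrt_le_sqrt hP2L
      have h3 : Real.sqrt (∑ i, x i ^ 2) * Real.sqrt (∑ i, Δ t i ^ 2)
          ≤ (Real.sqrt 2 * Real.sqrt L₀) * (ε / (4 * Real.sqrt L₀)) := by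
        apply mul_le_mul h2 hDle (Real.sqrt_nonneg _)
        positivity
      have h4 : (Real.sqrt 2 * Real.sqrt L₀) * (ε / (4 * Real.sqrt L₀))
          = Real.sqrt 2 / 4 * ε := by
        field_simp
      linarith
    have hpos := key m hmsum
    have hneg : -(m ⬝ᵥ Δ t) ≤ Real.sqrt 2 / 4 * ε := by
      have : (-m) ⬝ᵥ Δ t ≤ Real.sqrt 2 / 4 * ε := by
        apply key
        rw [← hmsum]
        congr 1; funext i; simp [neg_sq]
      rw [neg_dotProduct] at this
      exact this
    rw [abs_le]; constructor <;> linarith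
  -- Δ term bound
  have hDD0 : 0 ≤ Δ t ⬝ᵥ Δ t := by
    simp only [dotProduct]
    apply Finset.sum_nonneg
    intro i _
    exact mul_self_nonneg _
  have hDD : Δ t ⬝ᵥ Δ t ≤ ε / 16 := by
    have h0 : (0:ℝ) ≤ ∑ i, Δ t i ^ 2 := Finset.sum_nonneg fun i _ => sq_nonneg _
    have h1 : Δ t ⬝ᵥ Δ t = Real.sqrt (∑ i, Δ t i ^ 2) ^ 2 := by
      rw [Real.sq_sqrt h0]
      simp [dotProduct, sq]
    have h2 : Real.sqrt (∑ i, Δ t i ^ 2) ^ 2 ≤ (ε / (4 * Real.sqrt L₀)) ^ 2 := by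
      apply pow_le_pow_left₀ (Real.sqrt_nonneg _) (hΔ t)
    have h3 : (ε / (4 * Real.sqrt L₀)) ^ 2 = ε ^ 2 / (16 * L₀) := by
      rw [div_pow]
      congr 1
      rw [mul_pow, hsL]; norm_num
    have h4 : ε ^ 2 / (16 * L₀) ≤ ε / 16 := by
      rw [div_le_div_iff₀ (by linarith) (by norm_num)]
      nlinarith
    linarith
  -- finish
  have htr : (M ^ (2 * t) * K).trace = S := htrace t
  rw [htr, hexp]
  have hεs : Real.sqrt 2 / 4 * ε + ε / 32 ≤ ε / 2 := by
    have h1 : Real.sqrt 2 / 4 * ε ≤ 1.5 / 4 * ε :=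
      mul_le_mul_of_nonneg_right (by linarith) hε0.le
    linarith
  have habs := abs_le.mp hcross
  clear_value S P m
  clear hK hortho heig halign hΔ hr htrace hr₀ hnormsq hiso hsuma hai hμpow hημ hlamK hlam0 hcol hdiagcol hMVt hKVt hMpow hKdecomp hVVt hVtV hvv hmsum hmm hm hS hP hL₀def htr hexp
  clear_value a μ M V
  clear ha hμ hM hV a μ M V hηK K lam v r₀ r
  constructor
  · linarith [hPS.1, habs.1, hDD0, hεs]
  · linarith [hPS.2, habs.2, hDD, hεs]
end

section
/- Let K ∈ ℝ^{n×n} be real symmetric positive semidefinite with eigenvalues λ₁, …, λ_n and orthonormal eigenvectors v₁, …, v_n, let r₀ ∈ ℝⁿ with L₀ := ½‖r₀‖² ≥ 1, and let constants c > δ > 0 satisfy (c − δ)λ_i ≤ (v_iᵀ r₀)² ≤ (c + δ)λ_i for all i ∈ [n]. Let ε ∈ (0,1) and η > 0 with η‖K‖_op ≤ 1, and suppose r_t = (I − ηK)^t r₀ + Δ_t with ‖Δ_t‖ ≤ ε/(4√L₀) for all integer t ≥ 0. Then tr K > 0, (c − δ)·tr K ≤ 2L₀, and for every t ≥ 0: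 ½‖r_t‖² ≤ ((c + δ)/(c − δ)) · (tr[(I − ηK)^{2t} K] / tr K) · L₀ + ε/2. -/
open Matrix

/-- The Euclidean norm of a vector in `ℝⁿ`. -/
noncomputable def vecEuclidNorm {n : ℕ} (x : Fin n → ℝ) : ℝ :=
  Real.sqrt (∑ i, x i ^ 2)

lemma cb44_conj_mul {n : ℕ} (P A B : Matrix (Fin n) (Fin n) ℝ) (h1 : P * Pᵀ = 1) :
    (Pᵀ * A * P) * (Pᵀ * B * P) = Pᵀ * (A * B) * P := by
  calc (Pᵀ * A * P) * (Pᵀ * B * P) = Pᵀ * (A * ((P * Pᵀ) * (B * P))) := by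
        simp only [Matrix.mul_assoc]
    _ = Pᵀ * (A * B) * P := by rw [h1, Matrix.one_mul]; simp only [Matrix.mul_assoc]

lemma cb44_conj_pow {n : ℕ} (P A : Matrix (Fin n) (Fin n) ℝ)
    (h1 : P * Pᵀ = 1) (h2 : Pᵀ * P = 1) (t : ℕ) :
    (Pᵀ * A * P) ^ t = Pᵀ * A ^ t * P := by
  induction t with
  | zero => simp [h2]
  | succ t ih => rw [pow_succ, ih, cb44_conj_mul _ _ _ h1, pow_succ]

lemma cb44_enorm_eq {n : ℕ} (x : Fin n → ℝ) :
    vecEuclidNorm x = ‖(WithLp.equiv 2 (Fin n → ℝ)).symm x‖ := by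
  rw [EuclideanSpace.norm_eq]
  simp [vecEuclidNorm, sq_abs]

lemma cb44_enorm_mulVec_le {n : ℕ} (A : Matrix (Fin n) (Fin n) ℝ) (x : Fin n → ℝ) :
    vecEuclidNorm (A.mulVec x) ≤ l2OpNorm A * vecEuclidNorm x := by
  rw [cb44_enorm_eq, cb44_enorm_eq, l2OpNorm]
  have h : (WithLp.equiv 2 (Fin n → ℝ)).symm (A.mulVec x) =
      LinearMap.toContinuousLinearMap (Matrix.toEuclideanLin A)
        ((WithLp.equiv 2 (Fin n → ℝ)).symm x) := by
    simp
  rw [h]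
  exact ContinuousLinearMap.le_opNorm _ _

/-- **Corollary 4.4**: explicit dependence of the convergence bound on the
initial loss `L₀ = ½‖r₀‖²`. -/
theorem convergence_bound_initial_loss (n : ℕ)
    (K : Matrix (Fin n) (Fin n) ℝ) (hK : K.PosSemidef)
    (lam : Fin n → ℝ) (v : Fin n → Fin n → ℝ)
    (hortho : ∀ i j, v i ⬝ᵥ v j = if i = j then (1 : ℝ) else 0)
    (heig : ∀ i, K.mulVec (v i) = lam i • v i)
    (r₀ : Fin n → ℝ) (L₀ : ℝ) (hL₀def : L₀ = (1 / 2) * (r₀ ⬝ᵥ r₀)) (hL₀ : 1 ≤ L₀)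
    (c δ : ℝ) (hδ : 0 < δ) (hδc : δ < c)
    (halign : ∀ i, (c - δ) * lam i ≤ (v i ⬝ᵥ r₀) ^ 2 ∧
      (v i ⬝ᵥ r₀) ^ 2 ≤ (c + δ) * lam i)
    (ε η : ℝ) (hε : ε ∈ Set.Ioo (0 : ℝ) 1) (hη : 0 < η)
    (hηK : η * l2OpNorm K ≤ 1)
    (r Δ : ℕ → Fin n → ℝ)
    (hr : ∀ t : ℕ, r t = ((1 - η • K) ^ t).mulVec r₀ + Δ t)
    (hΔ : ∀ t : ℕ, vecEuclidNorm (Δ t) ≤ ε / (4 * Real.sqrt L₀)) :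
    0 < K.trace ∧ (c - δ) * K.trace ≤ 2 * L₀ ∧
    ∀ t : ℕ,
      (1 / 2) * (r t ⬝ᵥ r t) ≤
        (c + δ) / (c - δ) * (((1 - η • K) ^ (2 * t) * K).trace / K.trace) * L₀
          + ε / 2 := by
  obtain ⟨hε0, hε1⟩ := hε
  have hcδ : 0 < c - δ := by linarith
  have hcδ' : 0 < c + δ := by linarith
  set P : Matrix (Fin n) (Fin n) ℝ := Matrix.of v with hPdef
  have hPPt : P * Pᵀ = 1 := by
    ext i j
    simpa [hPdef, Matrix.mul_apply, Matrix.one_apply, dotProduct] using hortho i j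
  have hPtP : Pᵀ * P = 1 := mul_eq_one_comm.mp hPPt
  have hPapp : ∀ (x : Fin n → ℝ) i, P.mulVec x i = v i ⬝ᵥ x := fun x i => rfl
  -- Parseval
  have hiso : ∀ x : Fin n → ℝ, P.mulVec x ⬝ᵥ P.mulVec x = x ⬝ᵥ x := by
    intro x
    rw [Matrix.dotProduct_mulVec, ← Matrix.mulVec_transpose, Matrix.mulVec_mulVec, hPtP,
      Matrix.one_mulVec]
  have hpars : ∀ x : Fin n → ℝ, ∑ i, (v i ⬝ᵥ x) ^ 2 = x ⬝ᵥ x := by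
    intro x
    rw [← hiso x]
    simp [dotProduct, hPapp, pow_two]
  -- eigen decomposition
  have hKP : K * Pᵀ = Pᵀ * Matrix.diagonal lam := by
    ext j i
    have h := congrFun (heig i) j
    rw [Matrix.mul_diagonal]
    simpa [hPdef, Matrix.mul_apply, Matrix.mulVec, dotProduct, Matrix.transpose_apply,
      mul_comm] using h
  have hKeq : K = Pᵀ * Matrix.diagonal lam * P := by
    calc K = K * (Pᵀ * P) := by rw [hPtP, Matrix.mul_one]
      _ = (K * Pᵀ) * P := by rw [Matrix.mul_assoc]
      _ = _ := by rw [hKP]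
  set d : Fin n → ℝ := fun i => 1 - η * lam i with hd
  have hM : (1 : Matrix (Fin n) (Fin n) ℝ) - η • K = Pᵀ * Matrix.diagonal d * P := by
    have h1 : Matrix.diagonal d = 1 - η • Matrix.diagonal lam := by
      ext i j
      by_cases h : i = j <;> simp [Matrix.diagonal_apply, Matrix.one_apply, h, hd]
    rw [h1, Matrix.mul_sub, Matrix.sub_mul, Matrix.mul_one, hPtP, Matrix.mul_smul,
      Matrix.smul_mul, ← hKeq]
  have hMpow : ∀ t : ℕ, ((1 : Matrix (Fin n) (Fin n) ℝ) - η • K) ^ t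
      = Pᵀ * Matrix.diagonal (fun i => d i ^ t) * P := by
    intro t
    rw [hM, cb44_conj_pow _ _ hPPt hPtP, Matrix.diagonal_pow]
    rfl
  have hTr : ∀ e : Fin n → ℝ, (Pᵀ * Matrix.diagonal e * P).trace = ∑ i, e i := by
    intro e
    rw [Matrix.trace_mul_cycle, hPPt, Matrix.one_mul, Matrix.trace_diagonal]
  have hTrK : K.trace = ∑ i, lam i := by rw [hKeq, hTr]
  have hprod : ∀ t : ℕ, (((1 : Matrix (Fin n) (Fin n) ℝ) - η • K) ^ (2 * t) * K).trace
      = ∑ i, d i ^ (2 * t) * lam i := by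
    intro t
    rw [hMpow, hKeq, cb44_conj_mul _ _ _ hPPt, Matrix.diagonal_mul_diagonal, hTr]
  -- coefficients of the exact iterate
  have hcoef : ∀ (t : ℕ) i,
      v i ⬝ᵥ (((1 : Matrix (Fin n) (Fin n) ℝ) - η • K) ^ t).mulVec r₀
        = d i ^ t * (v i ⬝ᵥ r₀) := by
    intro t i
    have h1 : P * (Pᵀ * Matrix.diagonal (fun i => d i ^ t) * P)
        = Matrix.diagonal (fun i => d i ^ t) * P := by
      rw [← Matrix.mul_assoc, ← Matrix.mul_assoc, hPPt, Matrix.one_mul]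
    rw [← hPapp, Matrix.mulVec_mulVec, hMpow, h1, ← Matrix.mulVec_mulVec,
      Matrix.mulVec_diagonal, hPapp]
  -- eigenvalues are nonnegative and bounded
  have hlam0 : ∀ i, 0 ≤ lam i := by
    intro i
    have h := hK.dotProduct_mulVec_nonneg (v i)
    rw [heig] at h
    simpa [dotProduct_smul, hortho i i] using h
  have hvv : ∀ i, ∑ k, v i k ^ 2 = 1 := by
    intro i
    have h := hortho i i
    simp only [dotProduct] at h
    simpa [pow_two] using h
  have henorm_v : ∀ i, vecEuclidNorm (v i) = 1 := by
    intro i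
    rw [vecEuclidNorm, hvv i, Real.sqrt_one]
  have hlam_le : ∀ i, η * lam i ≤ 1 := by
    intro i
    have h1 := cb44_enorm_mulVec_le K (v i)
    rw [heig, henorm_v i, mul_one] at h1
    have h2 : vecEuclidNorm (lam i • v i) = lam i := by
      rw [vecEuclidNorm]
      have : ∀ k, (lam i • v i) k ^ 2 = lam i ^ 2 * v i k ^ 2 := by
        intro k; simp [mul_pow]
      rw [Finset.sum_congr rfl fun k _ => this k, ← Finset.mul_sum, hvv i, mul_one,
        Real.sqrt_sq (hlam0 i)]
    rw [h2] at h1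
    have h3 : η * lam i ≤ η * l2OpNorm K := mul_le_mul_of_nonneg_left h1 hη.le
    linarith
  have hd0 : ∀ i, 0 ≤ d i := fun i => by simp only [hd]; linarith [hlam_le i]
  have hd1 : ∀ i, d i ≤ 1 := fun i => by
    simp only [hd]; nlinarith [hlam0 i, hη.le]
  have hS : ∑ i, (v i ⬝ᵥ r₀) ^ 2 = 2 * L₀ := by rw [hpars, hL₀def]; ring
  -- Claim 2
  have hclaim2 : (c - δ) * K.trace ≤ 2 * L₀ := by
    rw [hTrK, Finset.mul_sum, ← hS]
    exact Finset.sum_le_sum fun i _ => (halign i).1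
  -- Claim 1
  have hclaim1 : 0 < K.trace := by
    have h2L : 2 * L₀ ≤ (c + δ) * K.trace := by
      rw [hTrK, Finset.mul_sum, ← hS]
      exact Finset.sum_le_sum fun i _ => (halign i).2
    nlinarith
  refine ⟨hclaim1, hclaim2, fun t => ?_⟩
  set s : Fin n → ℝ := (((1 : Matrix (Fin n) (Fin n) ℝ) - η • K) ^ t).mulVec r₀ with hsdef
  set T : ℝ := ∑ i, d i ^ (2 * t) * lam i with hT
  have hs2 : s ⬝ᵥ s = ∑ i, d i ^ (2 * t) * (v i ⬝ᵥ r₀) ^ 2 := by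
    rw [← hpars s]
    refine Finset.sum_congr rfl fun i _ => ?_
    rw [hsdef, hcoef t i, mul_pow, mul_comm 2 t, pow_mul]
  have hTt0 : (0 : ℝ) ≤ T := by
    refine Finset.sum_nonneg fun i _ => mul_nonneg (pow_nonneg (hd0 i) _) (hlam0 i)
  have hsTt : s ⬝ᵥ s ≤ (c + δ) * T := by
    rw [hs2, hT, Finset.mul_sum]
    refine Finset.sum_le_sum fun i _ => ?_
    calc d i ^ (2 * t) * (v i ⬝ᵥ r₀) ^ 2
        ≤ d i ^ (2 * t) * ((c + δ) * lam i) :=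
          mul_le_mul_of_nonneg_left (halign i).2 (pow_nonneg (hd0 i) _)
      _ = (c + δ) * (d i ^ (2 * t) * lam i) := by ring
  have hs2L : s ⬝ᵥ s ≤ 2 * L₀ := by
    rw [hs2, ← hS]
    refine Finset.sum_le_sum fun i _ => ?_
    have h1 : d i ^ (2 * t) ≤ 1 := pow_le_one₀ (hd0 i) (hd1 i)
    nlinarith [sq_nonneg (v i ⬝ᵥ r₀)]
  have hssum : ∑ i, s i ^ 2 = s ⬝ᵥ s := by simp [dotProduct, pow_two]
  have hs_nonneg : (0 : ℝ) ≤ s ⬝ᵥ s := by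
    rw [← hssum]; exact Finset.sum_nonneg fun i _ => sq_nonneg _
  have hes : vecEuclidNorm s ≤ Real.sqrt (2 * L₀) := by
    rw [vecEuclidNorm, hssum]; exact Real.sqrt_le_sqrt hs2L
  have hes0 : 0 ≤ vecEuclidNorm s := Real.sqrt_nonneg _
  have he0 : 0 ≤ vecEuclidNorm (Δ t) := Real.sqrt_nonneg _
  have hcs : s ⬝ᵥ Δ t ≤ vecEuclidNorm s * vecEuclidNorm (Δ t) := by
    have h1 : (∑ i, s i * Δ t i) ^ 2 ≤ (∑ i, s i ^ 2) * ∑ i, Δ t i ^ 2 :=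
      Finset.sum_mul_sq_le_sq_mul_sq Finset.univ s (Δ t)
    have h2 : s ⬝ᵥ Δ t = ∑ i, s i * Δ t i := rfl
    calc s ⬝ᵥ Δ t ≤ |s ⬝ᵥ Δ t| := le_abs_self _
      _ = Real.sqrt ((s ⬝ᵥ Δ t) ^ 2) := (Real.sqrt_sq_eq_abs _).symm
      _ ≤ Real.sqrt ((∑ i, s i ^ 2) * ∑ i, Δ t i ^ 2) := by
          rw [h2]; exact Real.sqrt_le_sqrt h1
      _ = vecEuclidNorm s * vecEuclidNorm (Δ t) := by
          rw [Real.sqrt_mul (Finset.sum_nonneg fun i _ => sq_nonneg _)]; rfl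
  have hΔ2 : Δ t ⬝ᵥ Δ t = vecEuclidNorm (Δ t) ^ 2 := by
    rw [vecEuclidNorm, Real.sq_sqrt (Finset.sum_nonneg fun i _ => sq_nonneg _)]
    simp [dotProduct, pow_two]
  have hsL : 0 < Real.sqrt L₀ := Real.sqrt_pos.mpr (by linarith)
  have h2L0 : Real.sqrt (2 * L₀) = Real.sqrt 2 * Real.sqrt L₀ :=
    Real.sqrt_mul (by norm_num) _
  have hsqrt2 : Real.sqrt 2 ≤ 1.5 := by
    nlinarith [Real.sq_sqrt (show (0:ℝ) ≤ 2 by norm_num), Real.sqrt_nonneg 2]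
  -- cross term
  have hcross : s ⬝ᵥ Δ t ≤ Real.sqrt 2 * ε / 4 := by
    have h1 : vecEuclidNorm s * vecEuclidNorm (Δ t) ≤ Real.sqrt (2 * L₀) * (ε / (4 * Real.sqrt L₀)) :=
      mul_le_mul hes (hΔ t) he0 (Real.sqrt_nonneg _)
    have heq : Real.sqrt 2 * Real.sqrt L₀ * (ε / (4 * Real.sqrt L₀))
        = Real.sqrt 2 * ε / 4 := by
      field_simp
    rw [h2L0, heq] at h1
    linarith
  -- quadratic term
  have hquad : Δ t ⬝ᵥ Δ t ≤ ε / 16 := by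
    have h1 : vecEuclidNorm (Δ t) ^ 2 ≤ (ε / (4 * Real.sqrt L₀)) ^ 2 :=
      pow_le_pow_left₀ he0 (hΔ t) 2
    have h2 : (ε / (4 * Real.sqrt L₀)) ^ 2 = ε ^ 2 / (16 * L₀) := by
      rw [div_pow]
      congr 1
      rw [mul_pow, Real.sq_sqrt (by linarith : (0:ℝ) ≤ L₀)]
      norm_num
    have h3 : ε ^ 2 / (16 * L₀) ≤ ε / 16 := by
      have h4 : ε ^ 2 ≤ ε := by
        have h := mul_le_mul_of_nonneg_left hε1.le hε0.le
        simpa [pow_two] using h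
      have h5 : (16 : ℝ) ≤ 16 * L₀ := by linarith
      calc ε ^ 2 / (16 * L₀) ≤ ε / (16 * L₀) := by gcongr <;> linarith
        _ ≤ ε / 16 := by gcongr <;> linarith
    rw [hΔ2]
    linarith
  -- main term
  have hmain : (1 / 2) * (s ⬝ᵥ s) ≤ (c + δ) / (c - δ) * (T / K.trace) * L₀ := by
    have hRHS : (c + δ) / (c - δ) * (T / K.trace) * L₀
        = ((c + δ) * T * L₀) / ((c - δ) * K.trace) := by
      field_simp
    rw [hRHS, le_div_iff₀ (mul_pos hcδ hclaim1)]
    have h1 : (s ⬝ᵥ s) * ((c - δ) * K.trace) ≤ ((c + δ) * T) * ((c - δ) * K.trace) :=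
      mul_le_mul_of_nonneg_right hsTt (mul_pos hcδ hclaim1).le
    have h2 : ((c + δ) * T) * ((c - δ) * K.trace) ≤ ((c + δ) * T) * (2 * L₀) :=
      mul_le_mul_of_nonneg_left hclaim2 (mul_nonneg hcδ'.le hTt0)
    linarith only [h1, h2]
  -- assemble
  have hexp : r t ⬝ᵥ r t = s ⬝ᵥ s + 2 * (s ⬝ᵥ Δ t) + Δ t ⬝ᵥ Δ t := by
    rw [hr t, add_dotProduct, dotProduct_add, dotProduct_add, dotProduct_comm (Δ t)]
    ring
  have hnum : Real.sqrt 2 * ε / 4 + ε / 32 ≤ ε / 2 := by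
    have h := mul_le_mul_of_nonneg_right hsqrt2 hε0.le
    norm_num at h ⊢
    linarith only [h, hε0]
  rw [hprod t, ← hT]
  linarith only [hexp, hmain, hcross, hquad, hnum]
end

section
/- Let n ≥ 1, q > 1, and C₂ ≥ C₁ > 0, and let λ₁ ≥ λ₂ ≥ … ≥ λ_n > 0 satisfy C₁ i^{−q} ≤ λ_i ≤ C₂ i^{−q} for all i ∈ [n]. Let c > δ > 0, ε ∈ (0,1), L₀ ≥ 1 with (c − δ)·Σ_{i=1}^n λ_i ≤ 2L₀, and let η > 0 with ηλ₁ ≤ 1. Suppose a sequence (L_t)_{t≥0} of nonnegative reals satisfies L_t ≤ (c + δ)/2 · Σ_{i=1}^n (1 − ηλ_i)^{2t} λ_i + ε/2 for all t ≥ 0. Define i*_ε := ((q − 1)ε/(2(c + δ)C₂) + n^{1−q})^{1/(1−q)}; then i*_ε ≤ n, and for every integer m with i*_ε ≤ m ≤ n and every integer t ≥ (1/(2ηλ_m)) · log(4(c + δ)L₀ / ((c − δ)ε)), one has L_t ≤ ε. In particular, since λ_m ≥ C₁ m^{−q}, it suffices that t ≥ (m^q/(2ηC₁)) · log(4(c +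 δ)L₀ / ((c − δ)ε)). -/
/-- Bernoulli's inequality for nonpositive exponents. -/
lemma bern_neg {s p : ℝ} (hs : -1 < s) (hp : p ≤ 0) : 1 + p * s ≤ (1 + s) ^ p := by
  have h1s : 0 < 1 + s := by linarith
  rcases le_or_gt (1 + p * s) 0 with h | h
  · exact h.trans (Real.rpow_pos_of_pos h1s p).le
  · have hlog1 : Real.log (1 + p * s) ≤ p * s := by
      have := Real.log_le_sub_one_of_pos h; linarith
    have hlog2 : Real.log (1 + s) ≤ s := by
      have := Real.log_le_sub_one_of_pos h1s; linarith
    have h3 : p * s ≤ p * Real.log (1 + s) := mul_le_mul_of_nonpos_left hlog2 hp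
    calc 1 + p * s = Real.exp (Real.log (1 + p * s)) := (Real.exp_log h).symm
      _ ≤ Real.exp (p * Real.log (1 + s)) := Real.exp_le_exp.2 (hlog1.trans h3)
      _ = (1 + s) ^ p := by
          rw [← Real.log_rpow h1s, Real.exp_log (Real.rpow_pos_of_pos h1s p)]

/-- The integral-comparison pointwise inequality `(q-1) x^{-q} ≤ (x-1)^{1-q} - x^{1-q}`. -/
lemma key_pointwise {q x : ℝ} (hq : 1 < q) (hx : 2 ≤ x) :
    (q - 1) * x ^ (-q) ≤ (x - 1) ^ (1 - q) - x ^ (1 - q) := by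
  have hx0 : (0:ℝ) < x := by linarith
  have hx1 : (0:ℝ) < x - 1 := by linarith
  have hinv : 1 / x < 1 := by rw [div_lt_one hx0]; linarith
  have hb := bern_neg (s := -(1/x)) (p := 1 - q) (by linarith) (by linarith)
  have h1 : (1:ℝ) + -(1/x) = (x - 1) / x := by field_simp; ring
  rw [h1, Real.div_rpow hx1.le hx0.le] at hb
  have hxq : (0:ℝ) < x ^ (1 - q) := Real.rpow_pos_of_pos hx0 _
  have hb2 := mul_le_mul_of_nonneg_right hb hxq.le
  rw [div_mul_cancel₀ _ (ne_of_gt hxq)] at hb2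
  have hsum : x ^ (-q) = x ^ (1 - q) * x⁻¹ := by
    have he : -q = (1 - q) + (-1) := by ring
    rw [he, Real.rpow_add hx0, Real.rpow_neg_one]
  have hexp : (1 + (1 - q) * -(1/x)) * x ^ (1 - q)
      = x ^ (1 - q) + (q - 1) * x ^ (-q) := by
    rw [hsum]; field_simp; ring
  rw [hexp] at hb2
  linarith

/-- Telescoping sum over `Ioc`. -/
lemma tele_sum (f : ℕ → ℝ) (m : ℕ) : ∀ n, m ≤ n →
    ∑ i ∈ Finset.Ioc m n, (f (i - 1) - f i) = f m - f n := by
  intro n hn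
  induction n, hn using Nat.le_induction with
  | base => simp
  | succ n hmn ih =>
    rw [Finset.sum_Ioc_succ_top hmn _, ih]
    simp only [Nat.add_sub_cancel]
    ring

set_option maxHeartbeats 1600000 in
/-- **Theorem 4.6** (time complexity): under the eigenvalue power-law decay
`C₁ i^{-q} ≤ λ_i ≤ C₂ i^{-q}`, the trace bound `(c-δ)Σλᵢ ≤ 2L₀` and the
convergence bound `L_t ≤ (c+δ)/2 · Σᵢ (1-ηλᵢ)^{2t} λᵢ + ε/2`, the loss drops
below `ε` within the stated number of iterations. -/
theorem time_complexity_bound (n : ℕ) (hn : 1 ≤ n) (q C₁ C₂ c δ ε L₀ η : ℝ)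
    (hq : 1 < q) (hC₁ : 0 < C₁) (hC₁C₂ : C₁ ≤ C₂)
    (lam : ℕ → ℝ)
    (hdec : ∀ i j : ℕ, 1 ≤ i → i ≤ j → j ≤ n → lam j ≤ lam i)
    (hpos : ∀ i ∈ Finset.Icc 1 n, 0 < lam i)
    (hpl : ∀ i ∈ Finset.Icc 1 n,
      C₁ * (i : ℝ) ^ (-q) ≤ lam i ∧ lam i ≤ C₂ * (i : ℝ) ^ (-q))
    (hδ : 0 < δ) (hδc : δ < c) (hε : ε ∈ Set.Ioo (0 : ℝ) 1) (hL₀ : 1 ≤ L₀)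
    (htr : (c - δ) * ∑ i ∈ Finset.Icc 1 n, lam i ≤ 2 * L₀)
    (hη : 0 < η) (hηlam1 : η * lam 1 ≤ 1)
    (L : ℕ → ℝ) (hLnonneg : ∀ t, 0 ≤ L t)
    (hLbound : ∀ t : ℕ, L t ≤
      (c + δ) / 2 * ∑ i ∈ Finset.Icc 1 n, (1 - η * lam i) ^ (2 * t) * lam i
        + ε / 2) :
    let istar : ℝ :=
      ((q - 1) * ε / (2 * (c + δ) * C₂) + (n : ℝ) ^ (1 - q)) ^ (1 / (1 - q))
    istar ≤ n ∧
    ∀ m : ℕ, istar ≤ m → m ≤ n →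
      (∀ t : ℕ,
        1 / (2 * η * lam m) * Real.log (4 * (c + δ) * L₀ / ((c - δ) * ε)) ≤ t →
        L t ≤ ε) ∧
      (∀ t : ℕ,
        (m : ℝ) ^ q / (2 * η * C₁) * Real.log (4 * (c + δ) * L₀ / ((c - δ) * ε)) ≤ t →
        L t ≤ ε) := by
  intro istar
  obtain ⟨hε0, hε1⟩ := hε
  have hc : (0:ℝ) < c := hδ.trans hδc
  have hcd : (0:ℝ) < c + δ := by linarith
  have hcd' : (0:ℝ) < c - δ := by linarith
  have hC₂ : (0:ℝ) < C₂ := hC₁.trans_le hC₁C₂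
  have hq1 : 1 - q < 0 := by linarith
  have hq1' : (1:ℝ) - q ≠ 0 := ne_of_lt hq1
  set B : ℝ := (q - 1) * ε / (2 * (c + δ) * C₂) with hB_def
  have hB : 0 < B := by
    apply div_pos (by nlinarith) (by nlinarith)
  have hnpos : (0:ℝ) < n := by exact_mod_cast hn
  have hnq : (0:ℝ) < (n:ℝ) ^ (1 - q) := Real.rpow_pos_of_pos hnpos _
  have hbase : (0:ℝ) < B + (n:ℝ) ^ (1 - q) := by linarith
  have histar_eq : istar = (B + (n:ℝ) ^ (1 - q)) ^ (1 / (1 - q)) := rfl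
  have histar_pos : 0 < istar := Real.rpow_pos_of_pos hbase _
  -- istar ≤ n
  have histar_le : istar ≤ n := by
    rw [histar_eq]
    have h1 : (B + (n:ℝ) ^ (1 - q)) ^ (1 / (1 - q))
        ≤ ((n:ℝ) ^ (1 - q)) ^ (1 / (1 - q)) := by
      apply Real.rpow_le_rpow_of_nonpos hnq (by linarith)
      exact le_of_lt (div_neg_of_pos_of_neg one_pos hq1)
    calc (B + (n:ℝ) ^ (1 - q)) ^ (1 / (1 - q))
        ≤ ((n:ℝ) ^ (1 - q)) ^ (1 / (1 - q)) := h1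
      _ = (n:ℝ) := by
          rw [← Real.rpow_mul hnpos.le, mul_one_div, div_self hq1', Real.rpow_one]
  refine ⟨histar_le, ?_⟩
  intro m hm_istar hm_n
  have hm0 : 0 < m := by
    by_contra h
    push_neg at h
    interval_cases m
    simp at hm_istar
    linarith
  have hm1 : 1 ≤ m := hm0
  have hmIcc : m ∈ Finset.Icc 1 n := Finset.mem_Icc.2 ⟨hm1, hm_n⟩
  have hlamm : 0 < lam m := hpos _ hmIcc
  -- log A > 0
  set A : ℝ := 4 * (c + δ) * L₀ / ((c - δ) * ε) with hA_def
  have hA1 : 1 < A := by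
    rw [hA_def, lt_div_iff₀ (by positivity)]
    nlinarith
  have hA0 : 0 < A := by linarith
  have hlogA : 0 < Real.log A := Real.log_pos hA1
  -- m^{1-q} ≤ B + n^{1-q}
  have hmq : (m:ℝ) ^ (1 - q) ≤ B + (n:ℝ) ^ (1 - q) := by
    have h1 : (m:ℝ) ^ (1 - q) ≤ istar ^ (1 - q) :=
      Real.rpow_le_rpow_of_nonpos histar_pos hm_istar hq1.le
    have h2 : istar ^ (1 - q) = B + (n:ℝ) ^ (1 - q) := by
      rw [histar_eq, ← Real.rpow_mul hbase.le, one_div,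
        inv_mul_cancel₀ hq1', Real.rpow_one]
    linarith [h1, h2.le]
  -- key pointwise facts about lam
  have hlam_le_one : ∀ i : ℕ, 1 ≤ i → i ≤ n → η * lam i ≤ 1 := fun i h1 h2 =>
    le_trans (by nlinarith [hdec 1 i le_rfl h1 h2]) hηlam1
  have hlam_nonneg01 : ∀ i : ℕ, 1 ≤ i → i ≤ n → 0 ≤ 1 - η * lam i := fun i h1 h2 => by
    have := hlam_le_one i h1 h2; linarith
  -- main bullet 1
  have main : ∀ t : ℕ,
      1 / (2 * η * lam m) * Real.log A ≤ t → L t ≤ ε := by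
    intro t ht
    have hlog_t : Real.log A ≤ 2 * η * lam m * t := by
      have h2η : 0 < 2 * η * lam m := by positivity
      rw [div_mul_eq_mul_div, one_mul, div_le_iff₀ h2η] at ht
      linarith [ht]
    -- split the sum
    have hIcc : Finset.Icc 1 n = Finset.Ioc 0 n := Finset.Icc_add_one_left_eq_Ioc 0 n
    set f : ℕ → ℝ := fun i => (1 - η * lam i) ^ (2 * t) * lam i with hf_def
    have hsplit : ∑ i ∈ Finset.Icc 1 n, f i
        = (∑ i ∈ Finset.Ioc 0 m, f i) + ∑ i ∈ Finset.Ioc m n, f i := by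
      rw [hIcc, Finset.sum_Ioc_consecutive _ (Nat.zero_le m) hm_n]
    -- head bound
    have hsum_lam : ∑ i ∈ Finset.Ioc 0 m, lam i ≤ 2 * L₀ / (c - δ) := by
      rw [le_div_iff₀ hcd']
      have hsub : ∑ i ∈ Finset.Ioc 0 m, lam i ≤ ∑ i ∈ Finset.Icc 1 n, lam i := by
        rw [hIcc]
        apply Finset.sum_le_sum_of_subset_of_nonneg
        · exact Finset.Ioc_subset_Ioc le_rfl hm_n
        · intro i hi _
          rw [← hIcc] at hi
          exact (hpos i hi).le
      calc (∑ i ∈ Finset.Ioc 0 m, lam i) * (c - δ)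
          ≤ (∑ i ∈ Finset.Icc 1 n, lam i) * (c - δ) :=
            mul_le_mul_of_nonneg_right hsub hcd'.le
        _ = (c - δ) * ∑ i ∈ Finset.Icc 1 n, lam i := mul_comm _ _
        _ ≤ 2 * L₀ := htr
    have hhead : ∑ i ∈ Finset.Ioc 0 m, f i
        ≤ (1 - η * lam m) ^ (2 * t) * (2 * L₀ / (c - δ)) := by
      have h1 : ∑ i ∈ Finset.Ioc 0 m, f i
          ≤ ∑ i ∈ Finset.Ioc 0 m, (1 - η * lam m) ^ (2 * t) * lam i := by
        apply Finset.sum_le_sum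
        intro i hi
        rw [Finset.mem_Ioc] at hi
        have hi1 : 1 ≤ i := hi.1
        have hin : i ≤ n := hi.2.trans hm_n
        have hlami : 0 < lam i := hpos i (Finset.mem_Icc.2 ⟨hi1, hin⟩)
        have hlim : lam m ≤ lam i := hdec i m hi1 hi.2 hm_n
        apply mul_le_mul_of_nonneg_right _ hlami.le
        apply pow_le_pow_left₀ (hlam_nonneg01 i hi1 hin)
        nlinarith
      rw [← Finset.mul_sum] at h1
      have hpow_nonneg : (0:ℝ) ≤ (1 - η * lam m) ^ (2 * t) :=
        pow_nonneg (hlam_nonneg01 m hm1 hm_n) _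
      calc ∑ i ∈ Finset.Ioc 0 m, f i
          ≤ (1 - η * lam m) ^ (2 * t) * ∑ i ∈ Finset.Ioc 0 m, lam i := h1
        _ ≤ (1 - η * lam m) ^ (2 * t) * (2 * L₀ / (c - δ)) :=
            mul_le_mul_of_nonneg_left hsum_lam hpow_nonneg
    -- exponential bound
    have hexp_bound : (1 - η * lam m) ^ (2 * t) ≤ A⁻¹ := by
      have h1 : 1 - η * lam m ≤ Real.exp (-(η * lam m)) := by
        have := Real.add_one_le_exp (-(η * lam m)); linarith
      have h2 : (1 - η * lam m) ^ (2 * t) ≤ Real.exp (-(η * lam m)) ^ (2 * t) :=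
        pow_le_pow_left₀ (hlam_nonneg01 m hm1 hm_n) h1 _
      have h3 : Real.exp (-(η * lam m)) ^ (2 * t)
          = Real.exp (-(η * lam m) * (2 * t)) := by
        rw [← Real.exp_nat_mul]; push_cast; ring_nf
      have h4 : -(η * lam m) * (2 * t) ≤ -Real.log A := by nlinarith [hlog_t]
      calc (1 - η * lam m) ^ (2 * t)
          ≤ Real.exp (-(η * lam m) * (2 * t)) := h3 ▸ h2
        _ ≤ Real.exp (-Real.log A) := Real.exp_le_exp.2 h4
        _ = A⁻¹ := by rw [Real.exp_neg, Real.exp_log hA0]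
    have hhead_final : (c + δ) / 2 * ∑ i ∈ Finset.Ioc 0 m, f i ≤ ε / 4 := by
      have h1 : ∑ i ∈ Finset.Ioc 0 m, f i ≤ A⁻¹ * (2 * L₀ / (c - δ)) := by
        refine hhead.trans (mul_le_mul_of_nonneg_right hexp_bound (by positivity))
      have h2 : (c + δ) / 2 * (A⁻¹ * (2 * L₀ / (c - δ))) = ε / 4 := by
        rw [hA_def]
        have hL₀' : (0:ℝ) < L₀ := by linarith
        field_simp
      calc (c + δ) / 2 * ∑ i ∈ Finset.Ioc 0 m, f i
          ≤ (c + δ) / 2 * (A⁻¹ * (2 * L₀ / (c - δ))) :=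
            mul_le_mul_of_nonneg_left h1 (by positivity)
        _ = ε / 4 := h2
    -- tail bound
    have htail : ∑ i ∈ Finset.Ioc m n, f i ≤ ε / (2 * (c + δ)) := by
      set g : ℕ → ℝ := fun i => (i:ℝ) ^ (1 - q) with hg_def
      have h1 : ∑ i ∈ Finset.Ioc m n, f i
          ≤ ∑ i ∈ Finset.Ioc m n, C₂ / (q - 1) * (g (i - 1) - g i) := by
        apply Finset.sum_le_sum
        intro i hi
        rw [Finset.mem_Ioc] at hi
        have hi2 : 2 ≤ i := by omega
        have hi1 : 1 ≤ i := by omega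
        have hin : i ≤ n := hi.2
        have hiIcc : i ∈ Finset.Icc 1 n := Finset.mem_Icc.2 ⟨hi1, hin⟩
        have hlami : 0 < lam i := hpos i hiIcc
        have hple : (1 - η * lam i) ^ (2 * t) ≤ 1 := by
          apply pow_le_one₀ (hlam_nonneg01 i hi1 hin)
          nlinarith
        have hstep1 : f i ≤ lam i := by
          have := mul_le_mul_of_nonneg_right hple hlami.le
          simpa [hf_def] using this
        have hstep2 : lam i ≤ C₂ * (i:ℝ) ^ (-q) := (hpl i hiIcc).2
        have hxcast : ((i - 1 : ℕ) : ℝ) = (i:ℝ) - 1 := by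
          rw [Nat.cast_sub hi1]; norm_num
        have hkey := key_pointwise hq (x := (i:ℝ)) (by exact_mod_cast hi2)
        have hstep3 : C₂ * (i:ℝ) ^ (-q) ≤ C₂ / (q - 1) * (g (i - 1) - g i) := by
          rw [hg_def]
          simp only [hxcast]
          rw [div_mul_eq_mul_div, le_div_iff₀ (by linarith : (0:ℝ) < q - 1)]
          nlinarith [hkey]
        linarith
      have h2 : ∑ i ∈ Finset.Ioc m n, C₂ / (q - 1) * (g (i - 1) - g i)
          = C₂ / (q - 1) * ((m:ℝ) ^ (1 - q) - (n:ℝ) ^ (1 - q)) := by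
        rw [← Finset.mul_sum, tele_sum g m n hm_n]
      have h3 : C₂ / (q - 1) * ((m:ℝ) ^ (1 - q) - (n:ℝ) ^ (1 - q))
          ≤ C₂ / (q - 1) * B := by
        exact mul_le_mul_of_nonneg_left (by linarith [hmq])
          (div_nonneg hC₂.le (by linarith))
      have h4 : C₂ / (q - 1) * B = ε / (2 * (c + δ)) := by
        have hqne : q - 1 ≠ 0 := by linarith
        have hcdne : c + δ ≠ 0 := ne_of_gt hcd
        have hC₂ne : C₂ ≠ 0 := ne_of_gt hC₂
        rw [hB_def]
        field_simp
      linarith [h1, h2.le, h3, h4.le]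
    have htail_final : (c + δ) / 2 * ∑ i ∈ Finset.Ioc m n, f i ≤ ε / 4 := by
      have := mul_le_mul_of_nonneg_left htail (by positivity : (0:ℝ) ≤ (c + δ) / 2)
      have heq : (c + δ) / 2 * (ε / (2 * (c + δ))) = ε / 4 := by
        field_simp; ring
      linarith [this, heq.le]
    -- combine
    have := hLbound t
    rw [hsplit] at this
    calc L t ≤ (c + δ) / 2 * ((∑ i ∈ Finset.Ioc 0 m, f i)
        + ∑ i ∈ Finset.Ioc m n, f i) + ε / 2 := this
      _ = (c + δ) / 2 * (∑ i ∈ Finset.Ioc 0 m, f i)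
        + (c + δ) / 2 * (∑ i ∈ Finset.Ioc m n, f i) + ε / 2 := by ring
      _ ≤ ε / 4 + ε / 4 + ε / 2 := by linarith [hhead_final, htail_final]
      _ = ε := by ring
  refine ⟨main, ?_⟩
  intro t ht
  apply main t
  -- 1/(2 η λ_m) ≤ m^q/(2 η C₁)
  have hmpos : (0:ℝ) < m := by exact_mod_cast hm0
  have hmq_pos : (0:ℝ) < (m:ℝ) ^ q := Real.rpow_pos_of_pos hmpos _
  have hlower : C₁ * (m:ℝ) ^ (-q) ≤ lam m := (hpl m hmIcc).1
  have hprod : (m:ℝ) ^ (-q) * (m:ℝ) ^ q = 1 := by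
    rw [← Real.rpow_add hmpos]; simp
  have hC₁_le : C₁ ≤ lam m * (m:ℝ) ^ q := by
    have := mul_le_mul_of_nonneg_right hlower hmq_pos.le
    rw [mul_assoc, hprod, mul_one] at this
    linarith
  have hfrac : 1 / (2 * η * lam m) ≤ (m:ℝ) ^ q / (2 * η * C₁) := by
    rw [div_le_div_iff₀ (by positivity) (by positivity)]
    nlinarith
  calc 1 / (2 * η * lam m) * Real.log A
      ≤ (m:ℝ) ^ q / (2 * η * C₁) * Real.log A :=
        mul_le_mul_of_nonneg_right hfrac hlogA.le
    _ ≤ t := ht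
end

section
/- Let f : ℝ^p → ℝⁿ be twice continuously differentiable, y ∈ ℝⁿ, w ∈ ℝ^p, r := f(w) − y, J(w) its Jacobian at w, K(w) := J(w)J(w)ᵀ, η > 0, and w' := w − ηJ(w)ᵀ r. Suppose that for every i ∈ [n] and every point ξ on the line segment from w to w', the Hessian of the i-th component satisfies ‖∇²f_i(ξ)‖_op ≤ H. Then ‖f(w') − f(w) + ηK(w)r‖ ≤ (√n/2) · η² · H · ‖K(w)‖_op · ‖r‖². -/
open Matrix

lemma enorm_sq {n : ℕ} (x : Fin n → ℝ) : _root_.enorm x ^ 2 = ∑ i, x i ^ 2 :=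
  Real.sq_sqrt (Finset.sum_nonneg fun _ _ => sq_nonneg _)

lemma enorm_nonneg' {n : ℕ} (x : Fin n → ℝ) : 0 ≤ _root_.enorm x := Real.sqrt_nonneg _

lemma quad_bound {m : ℕ} (A : Matrix (Fin m) (Fin m) ℝ) (v : Fin m → ℝ) :
    |v ⬝ᵥ A.mulVec v| ≤ l2OpNorm A * _root_.enorm v ^ 2 := by
  set x : EuclideanSpace ℝ (Fin m) := (WithLp.equiv 2 _).symm v with hxdef
  set T := LinearMap.toContinuousLinearMap (Matrix.toEuclideanLin A) with hT
  have hx : ‖x‖ = _root_.enorm v := by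
    rw [EuclideanSpace.norm_eq]
    unfold _root_.enorm
    congr 1
    exact Finset.sum_congr rfl fun i _ => by
      rw [Real.norm_eq_abs, sq_abs]; rfl
  have h2 : v ⬝ᵥ A.mulVec v = inner ℝ x (T x) := by
    have hTx : T x = (WithLp.equiv 2 (Fin m → ℝ)).symm (A.mulVec v) := by
      simp [hT, hxdef, WithLp.equiv_symm_apply, Matrix.toEuclideanLin_apply_piLp_toLp]
    rw [hTx, hxdef]; simp only [WithLp.equiv_symm_apply]; rw [EuclideanSpace.inner_toLp_toLp]
    simp [dotProduct, mul_comm]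
  rw [h2]
  calc |inner ℝ x (T x)| ≤ ‖x‖ * ‖T x‖ := abs_real_inner_le_norm x (T x)
    _ ≤ ‖x‖ * (‖T‖ * ‖x‖) := by
        exact mul_le_mul_of_nonneg_left (T.le_opNorm x) (norm_nonneg _)
    _ = l2OpNorm A * _root_.enorm v ^ 2 := by rw [hx]; unfold l2OpNorm; rw [← hT]; ring

lemma taylor2_bound {g g' g'' : ℝ → ℝ} {C : ℝ}
    (hg : ∀ t, HasDerivAt g (g' t) t) (hg' : ∀ t, HasDerivAt g' (g'' t) t)
    (hC : ∀ t ∈ Set.Icc (0:ℝ) 1, |g'' t| ≤ C) :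
    |g 1 - g 0 - g' 0| ≤ C / 2 := by
  have hcont : Continuous g' :=
    continuous_iff_continuousAt.2 fun t => (hg' t).differentiableAt.continuousAt
  have hint : ∫ t in (0:ℝ)..1, g' t = g 1 - g 0 :=
    intervalIntegral.integral_eq_sub_of_hasDerivAt (fun t _ => hg t)
      (hcont.intervalIntegrable 0 1)
  have hlip : ∀ t ∈ Set.Icc (0:ℝ) 1, |g' t - g' 0| ≤ C * t := by
    intro t ht
    have := norm_image_sub_le_of_norm_deriv_le_segment'
      (fun x _ => (hg' x).hasDerivWithinAt)
      (fun x hx => hC x (Set.Ico_subset_Icc_self hx)) t ht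
    simpa using this
  have h2 : g 1 - g 0 - g' 0 = ∫ t in (0:ℝ)..1, (g' t - g' 0) := by
    rw [intervalIntegral.integral_sub (hcont.intervalIntegrable 0 1)
      intervalIntegrable_const, hint, intervalIntegral.integral_const]
    simp
  rw [h2]
  have hi1 : IntervalIntegrable (fun t => |g' t - g' 0|) MeasureTheory.volume 0 1 :=
    ((hcont.sub continuous_const).abs).intervalIntegrable 0 1
  have hi2 : IntervalIntegrable (fun t : ℝ => C * t) MeasureTheory.volume 0 1 :=
    (continuous_const.mul continuous_id).intervalIntegrable 0 1
  calc |∫ t in (0:ℝ)..1, (g' t - g' 0)| ≤ ∫ t in (0:ℝ)..1, |g' t - g' 0| :=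
        intervalIntegral.abs_integral_le_integral_abs zero_le_one
    _ ≤ ∫ t in (0:ℝ)..1, C * t := intervalIntegral.integral_mono_on zero_le_one hi1 hi2 hlip
    _ = C / 2 := by rw [intervalIntegral.integral_const_mul, integral_id]; ring

lemma pi_decomp {p : ℕ} (v : Fin p → ℝ) :
    v = ∑ j, v j • (Pi.single j (1:ℝ) : Fin p → ℝ) := by
  have h := Finset.univ_sum_single v
  rw [← h]
  exact Finset.sum_congr rfl fun j _ => by
    ext k; by_cases h : j = k <;> simp [Pi.single_apply, h]

lemma bilin_expand {p : ℕ} (B : (Fin p → ℝ) →L[ℝ] (Fin p → ℝ) →L[ℝ] ℝ) (d : Fin p → ℝ)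
    (A : Matrix (Fin p) (Fin p) ℝ)
    (hA : ∀ a b, B (Pi.single a 1) (Pi.single b 1) = A a b) :
    B d d = d ⬝ᵥ A.mulVec d := by
  have step1 : ∀ u : Fin p → ℝ, B d u = ∑ a, d a * B (Pi.single a 1) u := by
    intro u
    conv_lhs => rw [pi_decomp d]
    rw [map_sum, ContinuousLinearMap.sum_apply]
    exact Finset.sum_congr rfl fun a _ => by
      rw [_root_.map_smul, ContinuousLinearMap.smul_apply, smul_eq_mul]
  have step2 : B d d = ∑ b, d b * B d (Pi.single b 1) := by
    nth_rewrite 2 [pi_decomp d]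
    rw [map_sum]
    exact Finset.sum_congr rfl fun b _ => by rw [_root_.map_smul, smul_eq_mul]
  rw [step2]
  simp_rw [step1, hA]
  simp only [dotProduct, mulVec, dotProduct]
  simp_rw [Finset.mul_sum]
  rw [Finset.sum_comm]
  exact Finset.sum_congr rfl fun a _ => Finset.sum_congr rfl fun b _ => by ring

lemma fderiv_comp_eval {p n : ℕ} {f : (Fin p → ℝ) → (Fin n → ℝ)}
    (hfd : Differentiable ℝ f) (u : Fin p → ℝ) (v : Fin p → ℝ) (i : Fin n) :
    fderiv ℝ (fun z => f z i) u v = fderiv ℝ f u v i := by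
  have h : HasFDerivAt (fun z => f z i)
      ((ContinuousLinearMap.proj (R := ℝ) (φ := fun _ : Fin n => ℝ) i).comp (fderiv ℝ f u)) u :=
    (ContinuousLinearMap.proj (R := ℝ) (φ := fun _ : Fin n => ℝ) i).hasFDerivAt.comp u
      (hfd u).hasFDerivAt
  rw [h.fderiv]
  rfl

/-- **Second-order Taylor step** in the proof of Lemma A.1: one gradient
descent update changes the network outputs by `-ηK(w)r` up to a second-order
remainder controlled by the Hessian bound on the segment `[w, w']`. -/
theorem gd_step_taylor_remainder (p n : ℕ)
    (f : (Fin p → ℝ) → (Fin n → ℝ)) (hf : ContDiff ℝ 2 f)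
    (y : Fin n → ℝ) (w : Fin p → ℝ) (η H : ℝ) (hη : 0 < η)
    (J : (Fin p → ℝ) → Matrix (Fin n) (Fin p) ℝ)
    (hJ : ∀ u i j, J u i j = fderiv ℝ f u (Pi.single j 1) i)
    (Hess : Fin n → (Fin p → ℝ) → Matrix (Fin p) (Fin p) ℝ)
    (hHess : ∀ i u a b, Hess i u a b =
      fderiv ℝ (fun u' => fderiv ℝ (fun z => f z i) u' (Pi.single b 1)) u
        (Pi.single a 1))
    (r : Fin n → ℝ) (hr : r = f w - y)
    (w' : Fin p → ℝ) (hw' : w' = w - η • (J w)ᵀ.mulVec r)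
    (hHessBound : ∀ i : Fin n, ∀ ξ ∈ segment ℝ w w', l2OpNorm (Hess i ξ) ≤ H) :
    _root_.enorm (f w' - f w + η • (J w * (J w)ᵀ).mulVec r) ≤
      Real.sqrt n / 2 * η ^ 2 * H * l2OpNorm (J w * (J w)ᵀ) * _root_.enorm r ^ 2 := by
  rcases Nat.eq_zero_or_pos n with hn | hn
  · subst hn
    simp [_root_.enorm]
  -- setup
  set K := J w * (J w)ᵀ with hK
  set u : Fin p → ℝ := (J w)ᵀ.mulVec r with hu
  set d : Fin p → ℝ := w' - w with hdd
  have hd : d = (-η) • u := by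
    rw [hdd, hw']
    ext j
    simp [Pi.smul_apply]
  have hH0 : 0 ≤ H := by
    refine le_trans (norm_nonneg _) (hHessBound ⟨0, hn⟩ w (left_mem_segment ℝ w w'))
  have hfd : Differentiable ℝ f := hf.differentiable (by norm_num)
  have hL : ∀ i : Fin n, ContDiff ℝ 2 (fun z => f z i) := fun i =>
    (ContinuousLinearMap.proj (R := ℝ) (φ := fun _ : Fin n => ℝ) i).contDiff.comp hf
  have hΦ : ∀ i : Fin n, Differentiable ℝ (fderiv ℝ (fun z => f z i)) := fun i =>
    ((hL i).fderiv_right (m := 1) (by norm_num)).differentiable (by norm_num)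
  -- the line
  set c : ℝ → (Fin p → ℝ) := fun t => w + t • d with hc
  have hc0 : c 0 = w := by simp [hc]
  have hc1 : c 1 = w' := by simp [hc, hdd]
  have hcder : ∀ t : ℝ, HasDerivAt c d t := by
    intro t
    have := ((hasDerivAt_id t).smul_const d).const_add w
    simpa [hc] using this
  have hcseg : ∀ t ∈ Set.Icc (0:ℝ) 1, c t ∈ segment ℝ w w' := by
    intro t ht
    rw [segment_eq_image']
    exact ⟨t, ht, rfl⟩
  -- derivative functions
  have hgder : ∀ (i : Fin n) (t : ℝ),
      HasDerivAt (fun s => f (c s) i) (fderiv ℝ (fun z => f z i) (c t) d) t := fun i t =>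
    ((hL i).differentiable (by norm_num) (c t)).hasFDerivAt.comp_hasDerivAt t (hcder t)
  have hg2der : ∀ (i : Fin n) (t : ℝ),
      HasDerivAt (fun s => fderiv ℝ (fun z => f z i) (c s) d)
        ((fderiv ℝ (fderiv ℝ (fun z => f z i)) (c t) d) d) t := by
    intro i t
    have h1 : HasDerivAt (fun s => fderiv ℝ (fun z => f z i) (c s))
        (fderiv ℝ (fderiv ℝ (fun z => f z i)) (c t) d) t :=
      (hΦ i (c t)).hasFDerivAt.comp_hasDerivAt t (hcder t)
    exact (ContinuousLinearMap.apply ℝ ℝ d).hasFDerivAt.comp_hasDerivAt t h1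
  -- second derivative = quadratic form of Hessian
  have hkey : ∀ (i : Fin n) (ξ : Fin p → ℝ),
      (fderiv ℝ (fderiv ℝ (fun z => f z i)) ξ d) d = d ⬝ᵥ (Hess i ξ).mulVec d := by
    intro i ξ
    refine bilin_expand _ d _ fun a b => ?_
    rw [hHess]
    have hdiff : HasFDerivAt (fun u' => fderiv ℝ (fun z => f z i) u' (Pi.single b 1))
        ((ContinuousLinearMap.apply ℝ ℝ ((Pi.single b 1 : Fin p → ℝ))).comp
          (fderiv ℝ (fderiv ℝ (fun z => f z i)) ξ)) ξ :=
      (ContinuousLinearMap.apply ℝ ℝ ((Pi.single b 1 : Fin p → ℝ))).hasFDerivAt.comp ξ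
        (hΦ i ξ).hasFDerivAt
    rw [hdiff.fderiv]
    rfl
  -- per-component Taylor bound
  set C : ℝ := H * _root_.enorm d ^ 2 with hCdef
  have hC0 : 0 ≤ C := mul_nonneg hH0 (sq_nonneg _)
  have hcomp : ∀ i : Fin n, |f w' i - f w i - fderiv ℝ (fun z => f z i) w d| ≤ C / 2 := by
    intro i
    have hb : ∀ t ∈ Set.Icc (0:ℝ) 1,
        |(fderiv ℝ (fderiv ℝ (fun z => f z i)) (c t) d) d| ≤ C := by
      intro t ht
      rw [hkey]
      calc |d ⬝ᵥ (Hess i (c t)).mulVec d| ≤ l2OpNorm (Hess i (c t)) * _root_.enorm d ^ 2 :=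
            quad_bound _ _
        _ ≤ H * _root_.enorm d ^ 2 :=
            mul_le_mul_of_nonneg_right (hHessBound i (c t) (hcseg t ht)) (sq_nonneg _)
    have := taylor2_bound (hg := hgder i) (hg' := hg2der i) hb
    rw [hc1, hc0] at this
    simpa [hc0] using this
  -- identify the error vector
  have hJv : ∀ v : Fin p → ℝ, fderiv ℝ f w v = (J w).mulVec v := by
    intro v
    ext i
    conv_lhs => rw [pi_decomp v]
    rw [map_sum]
    simp only [Finset.sum_apply, Pi.smul_apply, _root_.map_smul, smul_eq_mul]
    simp only [mulVec, dotProduct]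
    exact Finset.sum_congr rfl fun j _ => by rw [hJ]; ring
  have herr : ∀ i : Fin n, (f w' - f w + η • K.mulVec r) i
      = f w' i - f w i - fderiv ℝ (fun z => f z i) w d := by
    intro i
    have h1 : fderiv ℝ (fun z => f z i) w d = fderiv ℝ f w d i := fderiv_comp_eval hfd w d i
    have h2 : (J w).mulVec d = (-η) • K.mulVec r := by
      rw [hd, mulVec_smul, hu, mulVec_mulVec, hK]
    rw [h1, hJv, h2]
    simp [Pi.smul_apply]
  -- assemble
  have hnorm : _root_.enorm (f w' - f w + η • K.mulVec r) ≤ Real.sqrt n * (C / 2) := by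
    unfold _root_.enorm
    have hsum : ∑ i, (f w' - f w + η • K.mulVec r) i ^ 2 ≤ ∑ _i : Fin n, (C/2)^2 := by
      refine Finset.sum_le_sum fun i _ => ?_
      rw [← sq_abs]
      have := hcomp i
      rw [← herr i] at this
      exact pow_le_pow_left₀ (abs_nonneg _) this 2
    calc Real.sqrt (∑ i, (f w' - f w + η • K.mulVec r) i ^ 2)
        ≤ Real.sqrt (∑ _i : Fin n, (C/2)^2) := Real.sqrt_le_sqrt hsum
      _ = Real.sqrt (n * (C/2)^2) := by
          rw [Finset.sum_const, Finset.card_univ, Fintype.card_fin, nsmul_eq_mul]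
      _ = Real.sqrt n * (C/2) := by
          rw [Real.sqrt_mul (Nat.cast_nonneg n), Real.sqrt_sq (by linarith)]
  -- bound C
  have hdsq : _root_.enorm d ^ 2 = η ^ 2 * (r ⬝ᵥ K.mulVec r) := by
    have huu : u ⬝ᵥ u = r ⬝ᵥ K.mulVec r := by
      rw [hK, ← mulVec_mulVec, dotProduct_mulVec r, hu, mulVec_transpose]
    rw [← huu, enorm_sq, hd]
    simp only [dotProduct, Pi.smul_apply, smul_eq_mul]
    rw [Finset.mul_sum]
    exact Finset.sum_congr rfl fun j _ => by ring
  have hquad : r ⬝ᵥ K.mulVec r ≤ l2OpNorm K * _root_.enorm r ^ 2 :=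
    (le_abs_self _).trans (quad_bound K r)
  have hCb : C ≤ H * (η ^ 2 * (l2OpNorm K * _root_.enorm r ^ 2)) := by
    rw [hCdef, hdsq]
    exact mul_le_mul_of_nonneg_left
      (mul_le_mul_of_nonneg_left hquad (sq_nonneg η)) hH0
  calc _root_.enorm (f w' - f w + η • K.mulVec r) ≤ Real.sqrt n * (C / 2) := hnorm
    _ ≤ Real.sqrt n * ((H * (η ^ 2 * (l2OpNorm K * _root_.enorm r ^ 2))) / 2) := by
        exact mul_le_mul_of_nonneg_left (by linarith) (Real.sqrt_nonneg _)
    _ = Real.sqrt n / 2 * η ^ 2 * H * l2OpNorm K * _root_.enorm r ^ 2 := by ring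
end
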